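/- arXiv:1612.06977 — 2 statements merged into one kernel-verified Lean document; each statement's English description precedes it below -/
import Mathlib

section
/- Let a, u, ψ : ℝ × ℝ → ℝ be continuously differentiable functions of (x,t) such that u satisfies the conservative transport equation ∂u/∂t + ∂/∂x(a(x,t)u) = 0 everywhere and ψ satisfies the adjoint equation ∂ψ/∂t + a(x,t)∂ψ/∂x = 0 everywhere. Let x_l, x_r : ℝ → ℝ be differentiable with x_l'(t) = a(x_l(t),t) and x_r'(t) = a(x_r(t),t) for all t. Then the function t ↦ ∫_{x_l(t)}^{x_r(t)} u(x,t)·ψ(x,t) dx is constant on ℝ. -/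
open Real intervalIntegral Filter Asymptotics Topology MeasureTheory

theorem sldg_aux_moving (w : ℝ × ℝ → ℝ) (hw : ContDiff ℝ 1 w) {g : ℝ → ℝ} {g' c t₀ : ℝ}
    (hg : HasDerivAt g g' t₀) (hgc : g t₀ = c) :
    HasDerivAt (fun t => ∫ x in c..g t, w (x, t)) (w (c, t₀) * g') t₀ := by
  have hwc : Continuous w := hw.continuous
  have hA : HasDerivAt (fun t => ∫ x in c..g t, w (x, t₀)) (w (c, t₀) * g') t₀ := by
    have hf : Continuous fun x : ℝ => w (x, t₀) := by fun_prop
    have hFTC : HasDerivAt (fun y => ∫ x in c..y, w (x, t₀)) (w (g t₀, t₀)) (g t₀) :=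
      intervalIntegral.integral_hasDerivAt_right (hf.intervalIntegrable _ _)
        (hf.stronglyMeasurableAtFilter _ _) hf.continuousAt
    have h := hFTC.comp t₀ hg
    rw [hgc] at h
    exact h
  have hB : HasDerivAt (fun t => ∫ x in c..g t, (w (x, t) - w (x, t₀))) 0 t₀ := by
    rw [hasDerivAt_iff_isLittleO]
    have h0 : (∫ x in c..g t₀, (w (x, t₀) - w (x, t₀))) = 0 := by simp
    simp only [h0, sub_zero, smul_zero]
    obtain ⟨K, U, hU, hlip⟩ := (hw.contDiffAt).exists_lipschitzOnWith (x := (c, t₀))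
    obtain ⟨r, hr, hball⟩ := Metric.mem_nhds_iff.mp hU
    obtain ⟨C, hC, hCb⟩ := (hg.hasFDerivAt.isBigO_sub).exists_pos
    have hCb' : ∀ᶠ t in 𝓝 t₀, |g t - c| ≤ C * |t - t₀| := by
      have := hCb.bound
      filter_upwards [this] with t ht
      simpa [hgc, Real.norm_eq_abs] using ht
    rw [Asymptotics.isLittleO_iff]
    intro ε hε
    have hK : (0:ℝ) ≤ (K : ℝ) := K.coe_nonneg
    set δ : ℝ := min (r / (C + 1)) (ε / ((K : ℝ) * C + 1)) with hδdef
    have hδpos : 0 < δ := by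
      apply lt_min
      · positivity
      · positivity
    have hd1 : δ * (C + 1) ≤ r := by
      have h1 : δ ≤ r / (C + 1) := min_le_left _ _
      have h2 : (0:ℝ) < C + 1 := by linarith
      calc δ * (C + 1) ≤ (r / (C + 1)) * (C + 1) := by gcongr
        _ = r := by field_simp
    have hd2 : δ * ((K : ℝ) * C + 1) ≤ ε := by
      have h1 : δ ≤ ε / ((K : ℝ) * C + 1) := min_le_right _ _
      have h2 : (0:ℝ) < (K : ℝ) * C + 1 := by positivity
      calc δ * ((K : ℝ) * C + 1) ≤ (ε / ((K : ℝ) * C + 1)) * ((K : ℝ) * C + 1) := by gcongr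
        _ = ε := by field_simp
    have hδev : ∀ᶠ t in 𝓝 t₀, |t - t₀| < δ := by
      filter_upwards [Metric.ball_mem_nhds t₀ hδpos] with t ht
      simpa [Real.dist_eq] using ht
    filter_upwards [hCb', hδev] with t hgt hts
    have htr : |t - t₀| < r := by nlinarith
    have hxmem : ∀ x ∈ Set.uIoc c (g t), ‖w (x, t) - w (x, t₀)‖ ≤ (K : ℝ) * |t - t₀| := by
      intro x hx
      have hx1 : min c (g t) < x := hx.1
      have hx2 : x ≤ max c (g t) := hx.2
      have hmm : max c (g t) - min c (g t) = |g t - c| := max_sub_min_eq_abs c (g t)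
      have hxc : |x - c| ≤ |g t - c| := by
        have h1 := min_le_left c (g t)
        have h2 := le_max_left c (g t)
        rw [abs_sub_le_iff]
        constructor <;> linarith
      have hxcr : |x - c| < r := by nlinarith
      have m1 : ((x, t) : ℝ × ℝ) ∈ U := by
        apply hball
        simp only [Metric.mem_ball, Prod.dist_eq, Real.dist_eq]
        exact max_lt hxcr htr
      have m2 : ((x, t₀) : ℝ × ℝ) ∈ U := by
        apply hball
        simp only [Metric.mem_ball, Prod.dist_eq, Real.dist_eq]
        exact max_lt hxcr (by simpa using hr)
      have hl := hlip.dist_le_mul (x, t) m1 (x, t₀) m2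
      simp only [Prod.dist_eq, Real.dist_eq, sub_self, abs_zero] at hl
      rw [Real.norm_eq_abs]
      calc |w (x, t) - w (x, t₀)| ≤ (K : ℝ) * max 0 |t - t₀| := hl
        _ = (K : ℝ) * |t - t₀| := by rw [max_eq_right (abs_nonneg _)]
    have hint := intervalIntegral.norm_integral_le_of_norm_le_const hxmem
    have habs : |g t - c| ≤ C * |t - t₀| := hgt
    calc ‖∫ x in c..g t, (w (x, t) - w (x, t₀))‖ ≤ (K : ℝ) * |t - t₀| * |g t - c| := hint
      _ ≤ (K : ℝ) * |t - t₀| * (C * |t - t₀|) := by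
        have hnn : (0:ℝ) ≤ (K : ℝ) * |t - t₀| := by positivity
        exact mul_le_mul_of_nonneg_left habs hnn
      _ ≤ ((K : ℝ) * C * δ) * |t - t₀| := by
        have h1 : (K : ℝ) * C * |t - t₀| ≤ (K : ℝ) * C * δ :=
          mul_le_mul_of_nonneg_left hts.le (by positivity)
        nlinarith [abs_nonneg (t - t₀)]
      _ ≤ ε * ‖t - t₀‖ := by
        rw [Real.norm_eq_abs]
        have h3 : (K : ℝ) * C * δ ≤ ε := by nlinarith
        exact mul_le_mul_of_nonneg_right h3 (abs_nonneg _)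
  have key : ∀ t, (∫ x in c..g t, w (x, t))
      = (∫ x in c..g t, w (x, t₀)) + ∫ x in c..g t, (w (x, t) - w (x, t₀)) := by
    intro t
    have hi1 : IntervalIntegrable (fun x : ℝ => w (x, t₀)) volume c (g t) :=
      Continuous.intervalIntegrable (by fun_prop) _ _
    have hi2 : IntervalIntegrable (fun x : ℝ => w (x, t) - w (x, t₀)) volume c (g t) :=
      Continuous.intervalIntegrable (by fun_prop) _ _
    rw [← intervalIntegral.integral_add hi1 hi2]
    exact intervalIntegral.integral_congr fun x _ => by ring
  have h := hA.add hB
  rw [add_zero] at h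
  exact h.congr_of_eventuallyEq (Eventually.of_forall key)

theorem sldg_aux_main (a w : ℝ × ℝ → ℝ) (ha : ContDiff ℝ 1 a) (hw : ContDiff ℝ 1 w)
    (hcw : ∀ p : ℝ × ℝ, fderiv ℝ w p (0, 1) = - fderiv ℝ (fun q => a q * w q) p (1, 0))
    (xl xr : ℝ → ℝ)
    (hxl : Differentiable ℝ xl) (hxr : Differentiable ℝ xr)
    (hodel : ∀ t : ℝ, deriv xl t = a (xl t, t))
    (hoder : ∀ t : ℝ, deriv xr t = a (xr t, t)) :
    ∀ s t : ℝ, (∫ x in xl s..xr s, w (x, s)) = ∫ x in xl t..xr t, w (x, t) := by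
  have haw : ContDiff ℝ 1 fun q => a q * w q := ha.mul hw
  have hwc : Continuous w := hw.continuous
  intro s t
  have key : ∀ t₀ : ℝ, HasDerivAt (fun τ => ∫ x in xl τ..xr τ, w (x, τ)) 0 t₀ := by
    intro t₀
    set c : ℝ := xl t₀ with hc
    set d : ℝ := xr t₀ with hd
    have hxrD : HasDerivAt xr (a (d, t₀)) t₀ := by
      have h := (hxr t₀).hasDerivAt
      rwa [hoder t₀] at h
    have hxlD : HasDerivAt xl (a (c, t₀)) t₀ := by
      have h := (hxl t₀).hasDerivAt
      rwa [hodel t₀] at h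
    -- continuity of the partial derivatives
    have hcont1 : Continuous fun p : ℝ × ℝ => fderiv ℝ w p (0, 1) :=
      (ContinuousLinearMap.apply ℝ ℝ ((0, 1) : ℝ × ℝ)).continuous.comp
        (hw.continuous_fderiv one_ne_zero)
    have hcont2 : Continuous fun p : ℝ × ℝ => fderiv ℝ (fun q => a q * w q) p (1, 0) :=
      (ContinuousLinearMap.apply ℝ ℝ ((1, 0) : ℝ × ℝ)).continuous.comp
        (haw.continuous_fderiv one_ne_zero)
    -- bound on the compact rectangle
    have hS : IsCompact ((Set.uIcc c d) ×ˢ (Set.Icc (t₀ - 1) (t₀ + 1))) :=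
      isCompact_uIcc.prod isCompact_Icc
    obtain ⟨M, hM⟩ := hS.exists_bound_of_continuousOn hcont1.continuousOn
    -- derivative of the middle piece
    have hG1 : HasDerivAt (fun τ => ∫ x in c..d, w (x, τ))
        (∫ x in c..d, fderiv ℝ w (x, t₀) (0, 1)) t₀ := by
      refine (intervalIntegral.hasDerivAt_integral_of_dominated_loc_of_deriv_le
        (F := fun τ x => w (x, τ)) (F' := fun τ x => fderiv ℝ w (x, τ) (0, 1))
        (bound := fun _ => M) (a := c) (b := d) (x₀ := t₀) (Metric.ball_mem_nhds t₀ one_pos) ?_ ?_ ?_ ?_ ?_ ?_).2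
      · exact Eventually.of_forall fun τ =>
          (Continuous.aestronglyMeasurable (by fun_prop))
      · exact Continuous.intervalIntegrable (by fun_prop) _ _
      · exact Continuous.aestronglyMeasurable
          (hcont1.comp (continuous_id.prodMk continuous_const))
      · refine MeasureTheory.ae_of_all _ fun x hx τ hτ => ?_
        refine hM (x, τ) ⟨Set.uIoc_subset_uIcc hx, ?_⟩
        have := Metric.mem_ball.mp hτ
        rw [Real.dist_eq, abs_sub_lt_iff] at this
        exact ⟨by linarith [this.1], by linarith [this.2]⟩
      · exact intervalIntegrable_const
      · refine MeasureTheory.ae_of_all _ fun x hx τ hτ => ?_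
        have hline : HasDerivAt (fun τ : ℝ => ((x, τ) : ℝ × ℝ)) ((0 : ℝ), (1 : ℝ)) τ :=
          (hasDerivAt_const τ x).prodMk (hasDerivAt_id τ)
        have hfd := ((hw.differentiable one_ne_zero) (x, τ)).hasFDerivAt
        simpa [Function.comp_def] using hfd.comp_hasDerivAt τ hline
    -- value of the middle derivative via FTC
    have hFTCval : (∫ x in c..d, fderiv ℝ w (x, t₀) (0, 1))
        = a (c, t₀) * w (c, t₀) - a (d, t₀) * w (d, t₀) := by
      have h1 : ∀ x ∈ Set.uIcc c d, HasDerivAt (fun y => a (y, t₀) * w (y, t₀))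
          (fderiv ℝ (fun q => a q * w q) (x, t₀) (1, 0)) x := by
        intro x _
        have hline : HasDerivAt (fun y : ℝ => ((y, t₀) : ℝ × ℝ)) ((1 : ℝ), (0 : ℝ)) x :=
          (hasDerivAt_id x).prodMk (hasDerivAt_const x t₀)
        have hfd := ((haw.differentiable one_ne_zero) (x, t₀)).hasFDerivAt
        simpa [Function.comp_def] using hfd.comp_hasDerivAt x hline
      have h2 : IntervalIntegrable
          (fun x => fderiv ℝ (fun q => a q * w q) (x, t₀) (1, 0)) volume c d :=
        Continuous.intervalIntegrable
          (hcont2.comp (continuous_id.prodMk continuous_const)) _ _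
      calc (∫ x in c..d, fderiv ℝ w (x, t₀) (0, 1))
          = ∫ x in c..d, -(fderiv ℝ (fun q => a q * w q) (x, t₀) (1, 0)) :=
            intervalIntegral.integral_congr fun x _ => hcw (x, t₀)
        _ = -(∫ x in c..d, fderiv ℝ (fun q => a q * w q) (x, t₀) (1, 0)) :=
            intervalIntegral.integral_neg
        _ = -(a (d, t₀) * w (d, t₀) - a (c, t₀) * w (c, t₀)) := by
            rw [intervalIntegral.integral_eq_sub_of_hasDerivAt h1 h2]
        _ = a (c, t₀) * w (c, t₀) - a (d, t₀) * w (d, t₀) := by ring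
    have hG2 : HasDerivAt (fun τ => ∫ x in d..xr τ, w (x, τ)) (w (d, t₀) * a (d, t₀)) t₀ :=
      sldg_aux_moving w hw hxrD rfl
    have hG3 : HasDerivAt (fun τ => ∫ x in c..xl τ, w (x, τ)) (w (c, t₀) * a (c, t₀)) t₀ :=
      sldg_aux_moving w hw hxlD rfl
    have hsum := (hG1.add hG2).sub hG3
    have hval : (∫ x in c..d, fderiv ℝ w (x, t₀) (0, 1)) + w (d, t₀) * a (d, t₀)
        - w (c, t₀) * a (c, t₀) = 0 := by
      rw [hFTCval]; ring
    rw [hval] at hsum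
    refine hsum.congr_of_eventuallyEq (Eventually.of_forall fun τ => ?_)
    have hiw : ∀ p q : ℝ, IntervalIntegrable (fun x => w (x, τ)) volume p q := fun p q =>
      Continuous.intervalIntegrable (by fun_prop) _ _
    have e1 : (∫ x in xl τ..c, w (x, τ)) + ∫ x in c..xr τ, w (x, τ)
        = ∫ x in xl τ..xr τ, w (x, τ) :=
      intervalIntegral.integral_add_adjacent_intervals (hiw _ _) (hiw _ _)
    have e2 : (∫ x in c..d, w (x, τ)) + ∫ x in d..xr τ, w (x, τ)
        = ∫ x in c..xr τ, w (x, τ) :=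
      intervalIntegral.integral_add_adjacent_intervals (hiw _ _) (hiw _ _)
    have e3 : (∫ x in xl τ..c, w (x, τ)) = -∫ x in c..xl τ, w (x, τ) :=
      intervalIntegral.integral_symm _ _
    show (∫ x in xl τ..xr τ, w (x, τ))
        = (∫ x in c..d, w (x, τ)) + (∫ x in d..xr τ, w (x, τ)) - ∫ x in c..xl τ, w (x, τ)
    linarith [e1, e2, e3]
  exact is_const_of_deriv_eq_zero
    (fun τ => (key τ).differentiableAt) (fun τ => (key τ).deriv) s t

/-- Identity (2.4): if `u` solves the conservative transport equation
`u_t + (a u)_x = 0`, `ψ` solves the adjoint equation `ψ_t + a ψ_x = 0`, and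
`x_l`, `x_r` are characteristic curves of `a`, then
`∫_{x_l(t)}^{x_r(t)} u ψ dx` is constant in `t`. -/
theorem sldg_stmt2
    (a u ψ : ℝ × ℝ → ℝ)
    (ha : ContDiff ℝ 1 a) (hu : ContDiff ℝ 1 u) (hψ : ContDiff ℝ 1 ψ)
    (hcons : ∀ p : ℝ × ℝ,
      fderiv ℝ u p (0, 1) + fderiv ℝ (fun q => a q * u q) p (1, 0) = 0)
    (hadj : ∀ p : ℝ × ℝ, fderiv ℝ ψ p (0, 1) + a p * fderiv ℝ ψ p (1, 0) = 0)
    (xl xr : ℝ → ℝ)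
    (hxl : Differentiable ℝ xl) (hxr : Differentiable ℝ xr)
    (hodel : ∀ t : ℝ, deriv xl t = a (xl t, t))
    (hoder : ∀ t : ℝ, deriv xr t = a (xr t, t)) :
    ∀ s t : ℝ,
      (∫ x in xl s..xr s, u (x, s) * ψ (x, s))
        = ∫ x in xl t..xr t, u (x, t) * ψ (x, t) := by
  have hw : ContDiff ℝ 1 fun p : ℝ × ℝ => u p * ψ p := hu.mul hψ
  have hcw : ∀ p : ℝ × ℝ, fderiv ℝ (fun q : ℝ × ℝ => u q * ψ q) p (0, 1)
      = - fderiv ℝ (fun q : ℝ × ℝ => a q * (u q * ψ q)) p (1, 0) := by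
    intro p
    have hda : DifferentiableAt ℝ a p := ha.differentiable one_ne_zero p
    have hdu : DifferentiableAt ℝ u p := hu.differentiable one_ne_zero p
    have hdψ : DifferentiableAt ℝ ψ p := hψ.differentiable one_ne_zero p
    have e1 : fderiv ℝ (fun q : ℝ × ℝ => u q * ψ q) p
        = u p • fderiv ℝ ψ p + ψ p • fderiv ℝ u p := fderiv_mul hdu hdψ
    have e2 : fderiv ℝ (fun q : ℝ × ℝ => a q * (u q * ψ q)) p
        = (a p * u p) • fderiv ℝ ψ p + ψ p • fderiv ℝ (fun q => a q * u q) p := by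
      have hfun : (fun q : ℝ × ℝ => a q * (u q * ψ q))
          = fun q : ℝ × ℝ => (a q * u q) * ψ q := by funext q; ring
      rw [hfun, fderiv_fun_mul (c := fun q => a q * u q) (hda.mul hdu) hdψ]
    have h1 := hcons p
    have h2 := hadj p
    rw [e1, e2]
    simp only [ContinuousLinearMap.add_apply, ContinuousLinearMap.coe_smul',
      Pi.smul_apply, smul_eq_mul]
    linear_combination (ψ p) * h1 + (u p) * h2
  exact fun s t =>
    sldg_aux_main a (fun p => u p * ψ p) ha hw hcw xl xr hxl hxr hodel hoder s t
end

section
/- Let T > 0 and define the velocity field v : ℝ × ℝ² → ℝ² by v(t, (x,y)) = π·cos(πt/T)·( −cos²(x/2)·sin(y) , sin(x)·cos²(y/2) ). Then every continuously differentiable curve γ : [0,T] → ℝ² with γ'(t) = v(t, γ(t)) for all t ∈ [0,T] satisfies γ(T) = γ(0). -/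
open Real

private lemma sin_lip (a b : ℝ) : |Real.sin a - Real.sin b| ≤ |a - b| := by
  rw [Real.sin_sub_sin]
  calc |2 * Real.sin ((a - b) / 2) * Real.cos ((a + b) / 2)|
      = 2 * |Real.sin ((a - b) / 2)| * |Real.cos ((a + b) / 2)| := by
        rw [abs_mul, abs_mul]; norm_num
    _ ≤ 2 * |(a - b) / 2| * 1 := by
        apply mul_le_mul
        · exact mul_le_mul_of_nonneg_left (Real.abs_sin_le_abs) (by norm_num)
        · exact Real.abs_cos_le_one _
        · positivity
        · positivity
    _ = |a - b| := by
        rw [abs_div, abs_of_pos (by norm_num : (0:ℝ) < 2)]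
        ring

private lemma cos_lip (a b : ℝ) : |Real.cos a - Real.cos b| ≤ |a - b| := by
  rw [Real.cos_sub_cos]
  calc |-2 * Real.sin ((a + b) / 2) * Real.sin ((a - b) / 2)|
      = 2 * |Real.sin ((a + b) / 2)| * |Real.sin ((a - b) / 2)| := by
        rw [abs_mul, abs_mul]; norm_num
    _ ≤ 2 * 1 * |(a - b) / 2| := by
        apply mul_le_mul
        · exact mul_le_mul_of_nonneg_left (Real.abs_sin_le_one _) (by norm_num)
        · exact Real.abs_sin_le_abs
        · positivity
        · positivity
    _ = |a - b| := by
        rw [abs_div, abs_of_pos (by norm_num : (0:ℝ) < 2)]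
        ring

private lemma cossq_half_lip (a b : ℝ) :
    |Real.cos (a / 2) ^ 2 - Real.cos (b / 2) ^ 2| ≤ |a - b| := by
  have h1 : Real.cos (a / 2) ^ 2 = 1 / 2 + Real.cos (2 * (a / 2)) / 2 := Real.cos_sq _
  have h2 : Real.cos (b / 2) ^ 2 = 1 / 2 + Real.cos (2 * (b / 2)) / 2 := Real.cos_sq _
  rw [h1, h2]
  have ha : 2 * (a / 2) = a := by ring
  have hb : 2 * (b / 2) = b := by ring
  rw [ha, hb]
  have : 1 / 2 + Real.cos a / 2 - (1 / 2 + Real.cos b / 2)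
      = (Real.cos a - Real.cos b) / 2 := by ring
  rw [this, abs_div]
  have := cos_lip a b
  have h2' : |(2 : ℝ)| = 2 := by norm_num
  rw [h2']
  linarith [abs_nonneg (a - b)]

private lemma prod_bound {A B C D u w : ℝ} (h1 : |A - B| ≤ u) (hC : |C| ≤ 1)
    (hB : |B| ≤ 1) (h2 : |C - D| ≤ w) : |A * C - B * D| ≤ u + w := by
  have key : A * C - B * D = (A - B) * C + B * (C - D) := by ring
  rw [key]
  calc |(A - B) * C + B * (C - D)| ≤ |(A - B) * C| + |B * (C - D)| := abs_add_le _ _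
    _ = |A - B| * |C| + |B| * |C - D| := by rw [abs_mul, abs_mul]
    _ ≤ u * 1 + 1 * w := by
        apply add_le_add
        · exact mul_le_mul h1 hC (abs_nonneg _) ((abs_nonneg _).trans h1)
        · exact mul_le_mul hB h2 (abs_nonneg _) zero_le_one
    _ = u + w := by ring

private lemma abs_cossq_le_one (x : ℝ) : |Real.cos x ^ 2| ≤ 1 := by
  rw [abs_pow]
  calc |Real.cos x| ^ 2 ≤ 1 ^ 2 := by
        apply pow_le_pow_left₀ (abs_nonneg _) (Real.abs_cos_le_one _)
    _ = 1 := one_pow 2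

/-- The spatial part of the velocity field is 2-Lipschitz. -/
private lemma F_lip (p q : ℝ × ℝ) :
    dist ((-Real.cos (p.1 / 2) ^ 2 * Real.sin p.2,
            Real.sin p.1 * Real.cos (p.2 / 2) ^ 2) : ℝ × ℝ)
         ((-Real.cos (q.1 / 2) ^ 2 * Real.sin q.2,
            Real.sin q.1 * Real.cos (q.2 / 2) ^ 2) : ℝ × ℝ)
      ≤ 2 * dist p q := by
  have hd1 : dist p.1 q.1 ≤ dist p q := le_max_left _ _
  have hd2 : dist p.2 q.2 ≤ dist p q := le_max_right _ _
  rw [Prod.dist_eq]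
  rw [Real.dist_eq, Real.dist_eq]
  rw [Real.dist_eq] at hd1 hd2
  apply max_le
  · have key : -Real.cos (p.1 / 2) ^ 2 * Real.sin p.2 -
        -Real.cos (q.1 / 2) ^ 2 * Real.sin q.2
        = -(Real.cos (p.1 / 2) ^ 2 * Real.sin p.2 -
            Real.cos (q.1 / 2) ^ 2 * Real.sin q.2) := by ring
    rw [key, abs_neg]
    calc |Real.cos (p.1 / 2) ^ 2 * Real.sin p.2 -
          Real.cos (q.1 / 2) ^ 2 * Real.sin q.2|
        ≤ |p.1 - q.1| + |p.2 - q.2| :=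
          prod_bound (cossq_half_lip _ _) (Real.abs_sin_le_one _)
            (abs_cossq_le_one _) (sin_lip _ _)
      _ ≤ dist p q + dist p q := add_le_add hd1 hd2
      _ = 2 * dist p q := by ring
  · calc |Real.sin p.1 * Real.cos (p.2 / 2) ^ 2 -
          Real.sin q.1 * Real.cos (q.2 / 2) ^ 2|
        ≤ |p.1 - q.1| + |p.2 - q.2| :=
          prod_bound (sin_lip _ _) (abs_cossq_le_one _)
            (Real.abs_sin_le_one _) (cossq_half_lip _ _)
      _ ≤ dist p q + dist p q := add_le_add hd1 hd2
      _ = 2 * dist p q := by ring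

/-- For the swirling deformation flow with time modulation
`g(t) = π cos(πt/T)`, every characteristic curve returns to its starting
point at time `T`. -/
theorem sldg_stmt15
    (T : ℝ) (hT : 0 < T)
    (v : ℝ → ℝ × ℝ → ℝ × ℝ)
    (hv : ∀ t : ℝ, ∀ p : ℝ × ℝ,
      v t p = (Real.pi * Real.cos (Real.pi * t / T)) •
        (-Real.cos (p.1 / 2) ^ 2 * Real.sin p.2,
          Real.sin p.1 * Real.cos (p.2 / 2) ^ 2)) :
    ∀ γ : ℝ → ℝ × ℝ,
      (∀ t ∈ Set.Icc 0 T, HasDerivAt γ (v t (γ t)) t) → γ T = γ 0 := by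
  intro γ hγ
  have hπ := Real.pi_pos
  set K : NNReal := ⟨2 * Real.pi, by positivity⟩ with hK
  have hlip : ∀ t, LipschitzWith K (v t) := by
    intro t
    apply LipschitzWith.of_dist_le_mul
    intro p q
    rw [hv t p, hv t q, dist_smul₀]
    have hc : ‖Real.pi * Real.cos (Real.pi * t / T)‖ ≤ Real.pi := by
      rw [Real.norm_eq_abs, abs_mul, abs_of_pos hπ]
      calc Real.pi * |Real.cos (Real.pi * t / T)| ≤ Real.pi * 1 :=
            mul_le_mul_of_nonneg_left (Real.abs_cos_le_one _) hπ.le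
        _ = Real.pi := mul_one _
    calc ‖Real.pi * Real.cos (Real.pi * t / T)‖ *
          dist ((-Real.cos (p.1 / 2) ^ 2 * Real.sin p.2,
                  Real.sin p.1 * Real.cos (p.2 / 2) ^ 2) : ℝ × ℝ)
               ((-Real.cos (q.1 / 2) ^ 2 * Real.sin q.2,
                  Real.sin q.1 * Real.cos (q.2 / 2) ^ 2) : ℝ × ℝ)
        ≤ Real.pi * (2 * dist p q) := by
          apply mul_le_mul hc (F_lip p q) dist_nonneg hπ.le
      _ = (K : ℝ) * dist p q := by rw [hK]; show _ = (2 * Real.pi) * dist p q; ring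
  set δ : ℝ → ℝ × ℝ := fun t => γ (T - t) with hδdef
  have hcosrev : ∀ t : ℝ, Real.cos (Real.pi * (T - t) / T) = -Real.cos (Real.pi * t / T) := by
    intro t
    have : Real.pi * (T - t) / T = Real.pi - Real.pi * t / T := by
      field_simp
    rw [this, Real.cos_pi_sub]
  have hδ : ∀ t ∈ Set.Icc (T / 2) T, HasDerivAt δ (v t (δ t)) t := by
    intro t ht
    have hmem : T - t ∈ Set.Icc (0 : ℝ) T := ⟨by linarith [ht.2], by linarith [ht.1, hT]⟩
    have h1 := hγ (T - t) hmem
    have h2 : HasDerivAt (fun s : ℝ => T - s) (-1) t := by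
      simpa using (hasDerivAt_id t).const_sub T
    have h3 : HasDerivAt δ ((-1 : ℝ) • v (T - t) (γ (T - t))) t :=
      HasDerivAt.scomp t h1 h2
    have h4 : (-1 : ℝ) • v (T - t) (γ (T - t)) = v t (δ t) := by
      rw [hv, hv, smul_smul, hcosrev t]
      norm_num
      exact ⟨Or.inl rfl, Or.inl rfl⟩
    rwa [h4] at h3
  have hmid : γ (T / 2) = δ (T / 2) := by
    rw [hδdef]
    congr 1
    ring
  have hsub : Set.Icc (T / 2) T ⊆ Set.Icc (0 : ℝ) T :=
    Set.Icc_subset_Icc (by linarith) le_rfl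
  have heq : Set.EqOn γ δ (Set.Icc (T / 2) T) := by
    apply ODE_solution_unique_of_mem_Icc_right
      (v := v) (s := fun _ => Set.univ) (K := K) (fun t _ => (hlip t).lipschitzOnWith)
    · exact fun t ht => (hγ t (hsub ht)).continuousAt.continuousWithinAt
    · exact fun t ht => (hγ t (hsub (Set.Ico_subset_Icc_self ht))).hasDerivWithinAt
    · exact fun t _ => Set.mem_univ _
    · exact fun t ht => (hδ t ht).continuousAt.continuousWithinAt
    · exact fun t ht => (hδ t (Set.Ico_subset_Icc_self ht)).hasDerivWithinAt
    · exact fun t _ => Set.mem_univ _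
    · exact hmid
  have hTmem : T ∈ Set.Icc (T / 2) T := ⟨by linarith, le_rfl⟩
  have := heq hTmem
  rw [hδdef] at this
  simpa using this
end
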